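/- arXiv:2210.01517 — 3 statements merged into one kernel-verified Lean document; each statement's English description precedes it below -/
import Mathlib

section
/- Let H₀,…,H_{N-1} be complex Hadamard matrices of order d and let L¹,…,L^{N-1} be the Latin squares arising as the developments of rows 1,…,N-1 of a normalized (d,N,1)-difference matrix over Z_d. Define, for i,j ∈ [d], the unit vectors A⁰_{i,j} = (1/√d) |i⟩ ⊗ Σ_{k∈[d]} ⟨k|H₀|j⟩ |k⟩ in C^d ⊗ C^d, and for 1 ≤ r ≤ N-1, A^r_{i,j} = (1/√d) Σ_{k∈[d]} |L^r(i,k)⟩ ⊗ ⟨k|H_r|j⟩ |k⟩. Then each family {A^r_{i,j} : i,j ∈ [d]} (0 ≤ r ≤ N-1) is an orthonormal basis of C^d ⊗ C^d. -/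
/-- Given complex Hadamard matrices `H_0,…,H_{N-1}` of order `d` and the
developments `L^r(i,k) = m_{r,k} + i` of the rows of a normalized `(d,N,1)`-difference matrix
over `Z_d`, each family `{A^r_{i,j}}` (product basis for `r = 0`, maximally entangled type for
`r ≥ 1`) is an orthonormal basis of `C^d ⊗ C^d`. -/
theorem stmt9 (d N : ℕ) [NeZero d] [NeZero N]
    (m : Fin N → ZMod d → ZMod d)
    (hnorm : ∀ l, m 0 l = 0)
    (hdm : ∀ i j : Fin N, i ≠ j → Function.Bijective (fun l => m i l - m j l))
    (H : Fin N → Matrix (ZMod d) (ZMod d) ℂ)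
    (hH1 : ∀ r a b, ‖H r a b‖ = 1)
    (hH2 : ∀ r, H r * (H r).conjTranspose = (d : ℂ) • (1 : Matrix (ZMod d) (ZMod d) ℂ))
    (A : Fin N → ZMod d × ZMod d → EuclideanSpace ℂ (ZMod d × ZMod d))
    (hA : ∀ (r : Fin N) (i j a b : ZMod d),
      A r (i, j) (a, b) =
        if a = m r b + i then ((Real.sqrt d : ℂ))⁻¹ * H r b j else 0) :
    ∀ r : Fin N, Orthonormal ℂ (A r) ∧ Submodule.span ℂ (Set.range (A r)) = ⊤ := by
  intro r
  have hd : (d : ℂ) ≠ 0 := Nat.cast_ne_zero.mpr (NeZero.ne d)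
  have hHc : (H r).conjTranspose * H r = (d : ℂ) • (1 : Matrix (ZMod d) (ZMod d) ℂ) := by
    have h1 : H r * ((d : ℂ)⁻¹ • (H r).conjTranspose) = 1 := by
      rw [Matrix.mul_smul, hH2 r, smul_smul, inv_mul_cancel₀ hd, one_smul]
    have h2 := mul_eq_one_comm.mp h1
    rw [Matrix.smul_mul] at h2
    calc (H r).conjTranspose * H r
        = (d : ℂ) • ((d : ℂ)⁻¹ • ((H r).conjTranspose * H r)) := by
          rw [smul_smul, mul_inv_cancel₀ hd, one_smul]
      _ = (d : ℂ) • 1 := by rw [h2]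
  have hcol : ∀ j j' : ZMod d, ∑ b : ZMod d, (starRingEnd ℂ) (H r b j) * H r b j'
      = if j = j' then (d : ℂ) else 0 := by
    intro j j'
    have := congrFun (congrFun hHc j) j'
    simpa [Matrix.mul_apply, Matrix.conjTranspose_apply, Matrix.one_apply,
      mul_ite, mul_one, mul_zero] using this
  have hsq : ((Real.sqrt d : ℂ)) * ((Real.sqrt d : ℂ)) = (d : ℂ) := by
    norm_cast
    exact Real.mul_self_sqrt (Nat.cast_nonneg d)
  have hc2 : ((Real.sqrt d : ℂ))⁻¹ * ((Real.sqrt d : ℂ))⁻¹ = (d : ℂ)⁻¹ := by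
    rw [← mul_inv, hsq]
  have key : ∀ p q : ZMod d × ZMod d, inner ℂ (A r p) (A r q) = if p = q then (1 : ℂ) else 0 := by
    rintro ⟨i, j⟩ ⟨i', j'⟩
    rw [PiLp.inner_apply]
    have hsum : ∀ x : ZMod d × ZMod d,
        inner ℂ (A r (i, j) x) (A r (i', j') x)
          = if x.1 = m r x.2 + i ∧ x.1 = m r x.2 + i' then
              ((d : ℂ))⁻¹ * ((starRingEnd ℂ) (H r x.2 j) * H r x.2 j') else 0 := by
      rintro ⟨a, b⟩
      rw [hA, hA, RCLike.inner_apply']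
      by_cases h1 : a = m r b + i
      · by_cases h2 : a = m r b + i'
        · rw [if_pos h1, if_pos h2, if_pos ⟨h1, h2⟩, map_mul, map_inv₀,
            Complex.conj_ofReal, ← hc2]
          ring
        · rw [if_pos h1, if_neg h2, if_neg (fun h => h2 h.2), mul_zero]
      · rw [if_neg h1, map_zero, zero_mul, if_neg (fun h => h1 h.1)]
    rw [Finset.sum_congr rfl fun x _ => hsum x, Fintype.sum_prod_type_right]
    rcases eq_or_ne i i' with hii | hii
    · subst hii
      simp only [and_self, Finset.sum_ite_eq' Finset.univ, Finset.mem_univ, if_true]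
      rw [← Finset.mul_sum, hcol]
      rcases eq_or_ne j j' with hjj | hjj
      · subst hjj
        simp [inv_mul_cancel₀ hd]
      · simp [hjj, Prod.ext_iff]
    · have hne : ∀ x : ZMod d × ZMod d, ¬ (x.1 = m r x.2 + i ∧ x.1 = m r x.2 + i') := by
        rintro ⟨a, b⟩ ⟨h1, h2⟩
        exact hii (add_left_cancel (h1.symm.trans h2))
      rw [if_neg (by simp [Prod.ext_iff, hii])]
      exact Finset.sum_eq_zero fun b _ => Finset.sum_eq_zero fun a _ => if_neg (hne (a, b))
  have hon : Orthonormal ℂ (A r) := by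
    rw [orthonormal_iff_ite]; exact key
  refine ⟨hon, hon.linearIndependent.span_eq_top_of_card_eq_finrank ?_⟩
  simp [finrank_euclideanSpace]
end

section
/- Let H₀, H_r be complex Hadamard matrices of order d, let L^r be the development of row r (1 ≤ r ≤ N-1) of a normalized (d,N,1)-difference matrix over Z_d, and define A⁰_{i,j} = (1/√d)|i⟩ ⊗ Σ_k ⟨k|H₀|j⟩|k⟩ and A^r_{i',j'} = (1/√d) Σ_k |L^r(i',k)⟩ ⊗ ⟨k|H_r|j'⟩|k⟩. Then for all i,j,i',j' ∈ [d], |⟨A⁰_{i,j}, A^r_{i',j'}⟩| = 1/d; in particular, the product basis {A⁰_{i,j}} and the basis {A^r_{i',j'}} are mutually unbiased. -/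
/-- The product basis `{A^0_{i,j}}` (from Hadamard matrix `H_0`) and the
maximally entangled basis `{A^r_{i',j'}}` (from `H_r` and the development of row `r ≥ 1` of a
normalized `(d,N,1)`-difference matrix over `Z_d`) are mutually unbiased:
`|⟨A^0_{i,j}, A^r_{i',j'}⟩| = 1/d`. -/
theorem stmt10 (d N : ℕ) [NeZero d] [NeZero N]
    (m : Fin N → ZMod d → ZMod d)
    (hnorm : ∀ l, m 0 l = 0)
    (hdm : ∀ i j : Fin N, i ≠ j → Function.Bijective (fun l => m i l - m j l))
    (H : Fin N → Matrix (ZMod d) (ZMod d) ℂ)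
    (hH1 : ∀ r a b, ‖H r a b‖ = 1)
    (hH2 : ∀ r, H r * (H r).conjTranspose = (d : ℂ) • (1 : Matrix (ZMod d) (ZMod d) ℂ))
    (A : Fin N → ZMod d × ZMod d → EuclideanSpace ℂ (ZMod d × ZMod d))
    (hA : ∀ (r : Fin N) (i j a b : ZMod d),
      A r (i, j) (a, b) =
        if a = m r b + i then ((Real.sqrt d : ℂ))⁻¹ * H r b j else 0)
    (r : Fin N) (hr : 1 ≤ r.val) :
    ∀ i j i' j' : ZMod d,
      ‖(inner ℂ (A 0 (i, j)) (A r (i', j')) : ℂ)‖ = 1 / d := by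
  intro i j i' j'
  have hrne : r ≠ 0 := by
    intro h
    subst h
    simp at hr
  obtain ⟨b₀, hb₀⟩ := (hdm r 0 hrne).2 (i - i')
  have hb₀' : m r b₀ = i - i' := by simpa [hnorm] using hb₀
  have hinj : ∀ b, m r b = i - i' → b = b₀ := by
    intro b hb
    exact (hdm r 0 hrne).1 (by simp [hnorm, hb, hb₀'])
  set c : ℂ := (starRingEnd ℂ) (((Real.sqrt d : ℂ))⁻¹ * H 0 b₀ j) *
      (((Real.sqrt d : ℂ))⁻¹ * H r b₀ j') with hc
  have key : ∀ p : ZMod d × ZMod d,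
      (starRingEnd ℂ) (A 0 (i, j) p) * A r (i', j') p =
      if p = (i, b₀) then c else 0 := by
    rintro ⟨a, b⟩
    rw [hA, hA]
    by_cases h1 : a = m 0 b + i
    · have ha : a = i := by simpa [hnorm] using h1
      by_cases h2 : a = m r b + i'
      · have hb : b = b₀ := by
          apply hinj
          have : i = m r b + i' := ha ▸ h2
          rw [eq_sub_iff_add_eq]
          exact this.symm
        subst hb
        rw [if_pos h1, if_pos h2, if_pos (by rw [ha]), hc]
      · have hb : b ≠ b₀ := by
          intro hb
          apply h2
          subst hb
          rw [ha, hb₀']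
          ring
        rw [if_neg h2, mul_zero, if_neg (by simp [hb])]
    · have hne : ¬ ((a, b) = (i, b₀)) := by
        rintro hpq
        apply h1
        have ha : a = i := (Prod.mk.injEq _ _ _ _ ▸ hpq).1
        simp [hnorm, ha]
      rw [if_neg h1, map_zero, zero_mul, if_neg hne]
  have hinner : (inner ℂ (A 0 (i, j)) (A r (i', j')) : ℂ) = c := by
    rw [PiLp.inner_apply]
    simp only [RCLike.inner_apply]
    rw [Finset.sum_congr rfl (fun p _ => (mul_comm _ _).trans (key p))]
    simp
  rw [hinner, hc]
  have hd : (0 : ℝ) < d := Nat.cast_pos.mpr (Nat.pos_of_ne_zero (NeZero.ne d))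
  have hs : Real.sqrt d ≠ 0 := ne_of_gt (Real.sqrt_pos.mpr hd)
  have hnsq : ‖((Real.sqrt d : ℝ) : ℂ)⁻¹‖ = (Real.sqrt d)⁻¹ := by
    rw [norm_inv, Complex.norm_real, Real.norm_eq_abs, abs_of_nonneg (Real.sqrt_nonneg _)]
  have hnH : ∀ (s : Fin N) (a b : ZMod d), ‖H s a b‖ = 1 := by
    intro s a b
    rw [hH1]
  rw [norm_mul, RCLike.norm_conj, norm_mul, norm_mul, hnsq, hnH, hnH]
  rw [mul_one, ← mul_inv, Real.mul_self_sqrt hd.le, one_div]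
end

section
/- Let H_r, H_{r'} be complex Hadamard matrices of order d and let L^r, L^{r'} be developments of two distinct rows r ≠ r' (both ≥ 1) of a normalized (d,N,1)-difference matrix over Z_d. Define A^r_{i,j} = (1/√d) Σ_k |L^r(i,k)⟩ ⊗ ⟨k|H_r|j⟩|k⟩ and similarly A^{r'}_{i',j'}. Then for all i,j,i',j' ∈ [d], |⟨A^r_{i,j}, A^{r'}_{i',j'}⟩| = 1/d, i.e., the two maximally entangled bases are mutually unbiased. -/
/-- Two maximally entangled bases built from Hadamard matrices `H_r, H_{r'}`
and the developments of two distinct rows `r ≠ r'` (both `≥ 1`) of a normalized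
`(d,N,1)`-difference matrix over `Z_d` are mutually unbiased:
`|⟨A^r_{i,j}, A^{r'}_{i',j'}⟩| = 1/d`. -/
theorem stmt11 (d N : ℕ) [NeZero d] [NeZero N]
    (m : Fin N → ZMod d → ZMod d)
    (hnorm : ∀ l, m 0 l = 0)
    (hdm : ∀ i j : Fin N, i ≠ j → Function.Bijective (fun l => m i l - m j l))
    (H : Fin N → Matrix (ZMod d) (ZMod d) ℂ)
    (hH1 : ∀ r a b, ‖H r a b‖ = 1)
    (hH2 : ∀ r, H r * (H r).conjTranspose = (d : ℂ) • (1 : Matrix (ZMod d) (ZMod d) ℂ))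
    (A : Fin N → ZMod d × ZMod d → EuclideanSpace ℂ (ZMod d × ZMod d))
    (hA : ∀ (r : Fin N) (i j a b : ZMod d),
      A r (i, j) (a, b) =
        if a = m r b + i then ((Real.sqrt d : ℂ))⁻¹ * H r b j else 0)
    (r r' : Fin N) (hr : 1 ≤ r.val) (hr' : 1 ≤ r'.val) (hrr : r ≠ r') :
    ∀ i j i' j' : ZMod d,
      ‖(inner ℂ (A r (i, j)) (A r' (i', j')) : ℂ)‖ = 1 / d := by
  intro i j i' j'
  have hd0 : (0:ℝ) < d := Nat.cast_pos.mpr (Nat.pos_of_ne_zero (NeZero.ne d))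
  obtain ⟨b0, hb0⟩ := (hdm r r' hrr).surjective (i' - i)
  simp only at hb0
  have hinj := (hdm r r' hrr).injective
  have key : (inner ℂ (A r (i, j)) (A r' (i', j')) : ℂ)
      = (starRingEnd ℂ) ((Real.sqrt d : ℂ)⁻¹ * H r b0 j)
        * ((Real.sqrt d : ℂ)⁻¹ * H r' b0 j') := by
    rw [PiLp.inner_apply]
    rw [Fintype.sum_eq_single ((m r b0 + i, b0) : ZMod d × ZMod d)]
    · rw [hA, hA]
      have h1 : m r b0 + i = m r b0 + i := rfl
      have h2 : m r b0 + i = m r' b0 + i' := by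
        have : m r b0 - m r' b0 = i' - i := hb0
        linear_combination (norm := ring_nf) this
      rw [if_pos h1, if_pos h2]
      simp [RCLike.inner_apply]
      ring
    · rintro ⟨a, b⟩ hp
      rw [RCLike.inner_apply, hA, hA]
      by_cases hb : b = b0
      · subst hb
        have ha : a ≠ m r b + i := by
          intro h; exact hp (by simp [h])
        rw [if_neg ha]; simp
      · by_cases ha : a = m r b + i
        · have ha' : a ≠ m r' b + i' := by
            intro h
            apply hb
            apply hinj
            show m r b - m r' b = m r b0 - m r' b0
            rw [hb0]
            have : m r b + i = m r' b + i' := ha ▸ h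
            linear_combination (norm := ring_nf) this
          rw [if_neg ha']; simp
        · rw [if_neg ha]; simp
  rw [key]
  have hs : Real.sqrt d ≠ 0 := ne_of_gt (Real.sqrt_pos.mpr hd0)
  have h1 : ‖H r b0 j‖ = 1 := hH1 r b0 j
  have h2 : ‖H r' b0 j'‖ = 1 := hH1 r' b0 j'
  rw [norm_mul, RingHomIsometric.norm_map, norm_mul, norm_mul, h1, h2]
  have : ‖((Real.sqrt d : ℂ))⁻¹‖ = (Real.sqrt d)⁻¹ := by
    rw [norm_inv, Complex.norm_real, Real.norm_eq_abs,
      abs_of_nonneg (Real.sqrt_nonneg _)]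
  rw [this]
  field_simp
  rw [Real.sq_sqrt hd0.le]
end
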